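/- Let α ∈ (0,1], let λ = max_t λ₂(W^t) be the maximum over t of the second-largest eigenvalue modulus of the mixing matrices, and let t₀(α) be the smallest positive integer such that λ ≤ (t₀(α)/(t₀(α)+1))^α · 1/(1 + (t₀(α))^{−α}). Then the decentralized Frank–Wolfe method with step size γ_t = 1/t^α satisfies, for all t ≥ 1, max_{i∈V} ‖x̄_t^i − x̄_t‖₂ ≤ C_p/t^α, and moreover √(Σ_{i=1}^N ‖x̄_t^i − x̄_t‖₂²) ≤ C_p/t^α, where C_p = (t₀(α))^α · √N · ρ̄. -/

import Mathlib

open Finset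
open scoped RealInnerProductSpace BigOperators


section aux
variable {N : ℕ} {E : Type*}

lemma l2norm_eq [SeminormedAddCommGroup E] (f : Fin N → E) :
    Real.sqrt (∑ i, ‖f i‖ ^ 2) = ‖(WithLp.equiv 2 (Fin N → E)).symm f‖ := by
  rw [← Real.sqrt_sq (norm_nonneg ((WithLp.equiv 2 (Fin N → E)).symm f)),
    PiLp.norm_sq_eq_of_L2]
  rfl

lemma le_l2 [SeminormedAddCommGroup E] (f : Fin N → E) (i : Fin N) :
    ‖f i‖ ≤ Real.sqrt (∑ j, ‖f j‖ ^ 2) := by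
  rw [← Real.sqrt_sq (norm_nonneg (f i))]
  exact Real.sqrt_le_sqrt (Finset.single_le_sum (f := fun j => ‖f j‖ ^ 2) (fun j _ => sq_nonneg _) (mem_univ i))

lemma l2_le_const [SeminormedAddCommGroup E] (f : Fin N → E) (ρ : ℝ) (hρ : 0 ≤ ρ)
    (h : ∀ i, ‖f i‖ ≤ ρ) :
    Real.sqrt (∑ i, ‖f i‖ ^ 2) ≤ Real.sqrt N * ρ := by
  have h1 : ∑ i, ‖f i‖ ^ 2 ≤ (N : ℝ) * ρ ^ 2 := by
    calc ∑ i, ‖f i‖ ^ 2 ≤ ∑ _i : Fin N, ρ ^ 2 :=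
          sum_le_sum fun i _ => pow_le_pow_left₀ (norm_nonneg _) (h i) 2
      _ = (N : ℝ) * ρ ^ 2 := by simp [card_univ]
  calc Real.sqrt (∑ i, ‖f i‖ ^ 2) ≤ Real.sqrt ((N : ℝ) * ρ ^ 2) := Real.sqrt_le_sqrt h1
    _ = Real.sqrt N * ρ := by
        rw [Real.sqrt_mul (by positivity), Real.sqrt_sq hρ]

lemma l2_smul_add [NormedAddCommGroup E] [NormedSpace ℝ E]
    (a b : ℝ) (ha : 0 ≤ a) (hb : 0 ≤ b) (f g : Fin N → E) :
    Real.sqrt (∑ i, ‖a • f i + b • g i‖ ^ 2)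
      ≤ a * Real.sqrt (∑ i, ‖f i‖ ^ 2) + b * Real.sqrt (∑ i, ‖g i‖ ^ 2) := by
  rw [l2norm_eq, l2norm_eq, l2norm_eq]
  have hrw : (WithLp.equiv 2 (Fin N → E)).symm (fun i => a • f i + b • g i)
      = a • (WithLp.equiv 2 (Fin N → E)).symm f
        + b • (WithLp.equiv 2 (Fin N → E)).symm g := rfl
  rw [hrw]
  calc ‖_‖ ≤ ‖a • (WithLp.equiv 2 (Fin N → E)).symm f‖
        + ‖b • (WithLp.equiv 2 (Fin N → E)).symm g‖ := norm_add_le _ _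
    _ = a * ‖(WithLp.equiv 2 (Fin N → E)).symm f‖
        + b * ‖(WithLp.equiv 2 (Fin N → E)).symm g‖ := by
        rw [norm_smul, norm_smul, Real.norm_of_nonneg ha, Real.norm_of_nonneg hb]

end aux

set_option maxHeartbeats 2000000 in
/-- Lemma on the consensus deviation: with step size
`γ_t = 1/t^α`, `λ = max_t λ₂(Wᵗ)` (expressed through the contraction of the
consensus step that it provides), and `t₀(α)` the smallest positive integer
with `λ ≤ (t₀/(t₀+1))^α / (1 + t₀^{−α})`, the decentralized Frank–Wolfe
iterates satisfy `max_i ‖x̄ᵗᵢ − x̄ₜ‖ ≤ C_p/t^α` and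
`√(∑ᵢ ‖x̄ᵗᵢ − x̄ₜ‖²) ≤ C_p/t^α` with `C_p = t₀(α)^α √N ρ̄`. -/
theorem stmt_1
    {n N : ℕ} (hN : 0 < N)
    (D : Set (EuclideanSpace ℝ (Fin n)))
    (hDconv : Convex ℝ D) (hDcomp : IsCompact D) (hDne : D.Nonempty)
    (ρ : ℝ) (hdiam : ∀ a ∈ D, ∀ b ∈ D, ‖a - b‖ ≤ ρ)
    (α : ℝ) (hα : α ∈ Set.Ioc (0 : ℝ) 1)
    -- symmetric doubly stochastic mixing matrices
    (W : ℕ → Matrix (Fin N) (Fin N) ℝ)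
    (hWsymm : ∀ t, (W t).IsSymm)
    (hWnonneg : ∀ t i j, 0 ≤ W t i j)
    (hWrow : ∀ t i, ∑ j, W t i j = 1)
    (hWcol : ∀ t j, ∑ i, W t i j = 1)
    -- `lam = max_t λ₂(Wᵗ)`: the consensus step contracts the deviation from
    -- the mean by the factor `lam`, uniformly in `t`
    (lam : ℝ) (hlam0 : 0 ≤ lam)
    (hWcontr : ∀ t (y : Fin N → EuclideanSpace ℝ (Fin n)),
      Real.sqrt (∑ i, ‖(∑ j, W t i j • y j) - (N : ℝ)⁻¹ • ∑ j, y j‖ ^ 2)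
        ≤ lam * Real.sqrt (∑ i, ‖y i - (N : ℝ)⁻¹ • ∑ j, y j‖ ^ 2))
    -- `t₀ = t₀(α)` is the smallest positive integer satisfying the condition
    (t0 : ℕ) (ht0pos : 0 < t0)
    (ht0 : lam ≤ ((t0 : ℝ) / ((t0 : ℝ) + 1)) ^ α * (1 + (t0 : ℝ) ^ (-α))⁻¹)
    (ht0min : ∀ s : ℕ, 0 < s →
      lam ≤ ((s : ℝ) / ((s : ℝ) + 1)) ^ α * (1 + (s : ℝ) ^ (-α))⁻¹ → t0 ≤ s)
    -- the iterates of the decentralized Frank–Wolfe method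
    (x xb v : ℕ → Fin N → EuclideanSpace ℝ (Fin n))
    (hxD : ∀ t i, x t i ∈ D)
    (hxb : ∀ t i, xb t i = ∑ j, W t i j • x t j)
    (hvD : ∀ t i, v t i ∈ D)
    -- Frank–Wolfe update with step size γ_t = 1/t^α
    (hstep : ∀ t : ℕ, 1 ≤ t → ∀ i,
      x (t + 1) i = xb t i + (((t : ℝ) ^ α)⁻¹) • (v t i - xb t i)) :
    ∀ t : ℕ, 1 ≤ t →
      (∀ i, ‖xb t i - (N : ℝ)⁻¹ • ∑ j, x t j‖
          ≤ (t0 : ℝ) ^ α * Real.sqrt N * ρ / (t : ℝ) ^ α) ∧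
      Real.sqrt (∑ i, ‖xb t i - (N : ℝ)⁻¹ • ∑ j, x t j‖ ^ 2)
          ≤ (t0 : ℝ) ^ α * Real.sqrt N * ρ / (t : ℝ) ^ α := by
  obtain ⟨hα0, hα1⟩ := hα
  have hNR : (0 : ℝ) < N := by exact_mod_cast hN
  have hρ0 : 0 ≤ ρ := by
    obtain ⟨a, ha⟩ := hDne
    have := hdiam a ha a ha
    simpa using this
  have ht0R : (0 : ℝ) < t0 := by exact_mod_cast ht0pos
  have hT0pos : (0 : ℝ) < (t0 : ℝ) ^ α := Real.rpow_pos_of_pos ht0R α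
  set C : ℝ := (t0 : ℝ) ^ α * Real.sqrt N * ρ with hCdef
  have hC0 : 0 ≤ C := by positivity
  -- the mean of points of `D` lies in `D`
  have hmean : ∀ y : Fin N → EuclideanSpace ℝ (Fin n), (∀ i, y i ∈ D) →
      (N : ℝ)⁻¹ • ∑ j, y j ∈ D := by
    intro y hy
    rw [Finset.smul_sum]
    refine hDconv.sum_mem (fun i _ => by positivity) ?_ (fun i _ => hy i)
    rw [Finset.sum_const, card_univ, Fintype.card_fin, nsmul_eq_mul]
    field_simp
  -- the consensus step preserves the sum
  have hsum_xb : ∀ t, ∑ i, xb t i = ∑ j, x t j := by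
    intro t
    calc ∑ i, xb t i = ∑ i, ∑ j, W t i j • x t j := by
          exact Finset.sum_congr rfl fun i _ => hxb t i
      _ = ∑ j, ∑ i, W t i j • x t j := Finset.sum_comm
      _ = ∑ j, (∑ i, W t i j) • x t j := by
          exact Finset.sum_congr rfl fun j _ => (Finset.sum_smul).symm
      _ = ∑ j, x t j := by
          exact Finset.sum_congr rfl fun j _ => by rw [hWcol t j, one_smul]
  -- contraction of the consensus deviation
  have hcontr : ∀ t,
      Real.sqrt (∑ i, ‖xb t i - (N : ℝ)⁻¹ • ∑ j, x t j‖ ^ 2)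
        ≤ lam * Real.sqrt (∑ i, ‖x t i - (N : ℝ)⁻¹ • ∑ j, x t j‖ ^ 2) := by
    intro t
    have := hWcontr t (x t)
    simp only [← hxb] at this
    exact this
  -- crude bound on the deviation of the iterates
  have hdbound : ∀ t,
      Real.sqrt (∑ i, ‖x t i - (N : ℝ)⁻¹ • ∑ j, x t j‖ ^ 2) ≤ Real.sqrt N * ρ := by
    intro t
    exact l2_le_const _ ρ hρ0 fun i => hdiam _ (hxD t i) _ (hmean (x t) (hxD t))
  -- `lam ≤ 1`
  have hbase1 : ((t0 : ℝ) / ((t0 : ℝ) + 1)) ^ α ≤ 1 := by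
    apply Real.rpow_le_one (by positivity) _ hα0.le
    rw [div_le_one (by positivity)]; linarith
  have hTneg : (0 : ℝ) ≤ (t0 : ℝ) ^ (-α) := Real.rpow_nonneg ht0R.le _
  have hinv1 : (1 + (t0 : ℝ) ^ (-α))⁻¹ ≤ 1 := by
    rw [inv_le_one_iff₀]; right; linarith
  have hlam1 : lam ≤ 1 := by
    calc lam ≤ ((t0 : ℝ) / ((t0 : ℝ) + 1)) ^ α * (1 + (t0 : ℝ) ^ (-α))⁻¹ := ht0
      _ ≤ 1 * 1 := by
          apply mul_le_mul hbase1 hinv1 (by positivity) zero_le_one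
      _ = 1 := by ring
  -- one-step recurrence
  have hrec : ∀ t : ℕ, 1 ≤ t →
      Real.sqrt (∑ i, ‖xb (t+1) i - (N : ℝ)⁻¹ • ∑ j, x (t+1) j‖ ^ 2)
        ≤ lam * ((1 - ((t : ℝ) ^ α)⁻¹) *
              Real.sqrt (∑ i, ‖xb t i - (N : ℝ)⁻¹ • ∑ j, x t j‖ ^ 2)
            + ((t : ℝ) ^ α)⁻¹ * (Real.sqrt N * ρ)) := by
    intro t ht
    have htR : (1 : ℝ) ≤ (t : ℝ) := by exact_mod_cast ht
    have hA1 : (1 : ℝ) ≤ (t : ℝ) ^ α := by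
      calc (1 : ℝ) = 1 ^ α := (Real.one_rpow α).symm
        _ ≤ (t : ℝ) ^ α := Real.rpow_le_rpow zero_le_one htR hα0.le
    set γ : ℝ := ((t : ℝ) ^ α)⁻¹ with hγdef
    have hγ0 : 0 ≤ γ := by positivity
    have hγ1 : γ ≤ 1 := by
      rw [hγdef]
      exact inv_le_one_of_one_le₀ hA1
    -- the sum of iterates after one step
    have hsx : ∑ j, x (t+1) j
        = (1 - γ) • (∑ j, x t j) + γ • (∑ j, v t j) := by
      calc ∑ j, x (t+1) j = ∑ j, ((1 - γ) • xb t j + γ • v t j) := by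
            refine Finset.sum_congr rfl fun j _ => ?_
            rw [hstep t ht j]; module
        _ = (1 - γ) • (∑ j, xb t j) + γ • (∑ j, v t j) := by
            rw [Finset.sum_add_distrib, Finset.smul_sum, Finset.smul_sum]
        _ = (1 - γ) • (∑ j, x t j) + γ • (∑ j, v t j) := by rw [hsum_xb]
    -- pointwise decomposition of the deviation
    have hdecomp : ∀ i, x (t+1) i - (N : ℝ)⁻¹ • ∑ j, x (t+1) j
        = (1 - γ) • (xb t i - (N : ℝ)⁻¹ • ∑ j, x t j)
          + γ • (v t i - (N : ℝ)⁻¹ • ∑ j, v t j) := by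
      intro i
      rw [hstep t ht i, hsx]; module
    have hfv : Real.sqrt (∑ i, ‖v t i - (N : ℝ)⁻¹ • ∑ j, v t j‖ ^ 2)
        ≤ Real.sqrt N * ρ :=
      l2_le_const _ ρ hρ0 fun i => hdiam _ (hvD t i) _ (hmean (v t) (hvD t))
    calc Real.sqrt (∑ i, ‖xb (t+1) i - (N : ℝ)⁻¹ • ∑ j, x (t+1) j‖ ^ 2)
        ≤ lam * Real.sqrt (∑ i, ‖x (t+1) i - (N : ℝ)⁻¹ • ∑ j, x (t+1) j‖ ^ 2) :=
          hcontr (t+1)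
      _ = lam * Real.sqrt (∑ i, ‖(1 - γ) • (xb t i - (N : ℝ)⁻¹ • ∑ j, x t j)
            + γ • (v t i - (N : ℝ)⁻¹ • ∑ j, v t j)‖ ^ 2) := by
          congr 2
          exact Finset.sum_congr rfl fun i _ => by rw [hdecomp i]
      _ ≤ lam * ((1 - γ) * Real.sqrt (∑ i, ‖xb t i - (N : ℝ)⁻¹ • ∑ j, x t j‖ ^ 2)
            + γ * Real.sqrt (∑ i, ‖v t i - (N : ℝ)⁻¹ • ∑ j, v t j‖ ^ 2)) := by
          apply mul_le_mul_of_nonneg_left _ hlam0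
          exact l2_smul_add (1 - γ) γ (by linarith) hγ0 _ _
      _ ≤ lam * ((1 - γ) * Real.sqrt (∑ i, ‖xb t i - (N : ℝ)⁻¹ • ∑ j, x t j‖ ^ 2)
            + γ * (Real.sqrt N * ρ)) := by
          apply mul_le_mul_of_nonneg_left _ hlam0
          have := mul_le_mul_of_nonneg_left hfv hγ0
          linarith
  -- the key estimate, by strong induction
  have key : ∀ t : ℕ, 1 ≤ t →
      Real.sqrt (∑ i, ‖xb t i - (N : ℝ)⁻¹ • ∑ j, x t j‖ ^ 2) ≤ C / (t : ℝ) ^ α := by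
    intro t
    induction t using Nat.strong_induction_on with
    | _ t ih =>
      intro ht
      have htRpos : (0 : ℝ) < (t : ℝ) := by exact_mod_cast ht
      have htApos : (0 : ℝ) < (t : ℝ) ^ α := Real.rpow_pos_of_pos htRpos α
      by_cases hcase : t ≤ t0
      · -- base case : t ≤ t0
        have h1 : Real.sqrt (∑ i, ‖xb t i - (N : ℝ)⁻¹ • ∑ j, x t j‖ ^ 2)
            ≤ Real.sqrt N * ρ := by
          calc Real.sqrt (∑ i, ‖xb t i - (N : ℝ)⁻¹ • ∑ j, x t j‖ ^ 2)
              ≤ lam * Real.sqrt (∑ i, ‖x t i - (N : ℝ)⁻¹ • ∑ j, x t j‖ ^ 2) := hcontr t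
            _ ≤ 1 * (Real.sqrt N * ρ) :=
                mul_le_mul hlam1 (hdbound t) (Real.sqrt_nonneg _) zero_le_one
            _ = Real.sqrt N * ρ := one_mul _
        refine h1.trans ?_
        rw [le_div_iff₀ htApos]
        have h2 : (t : ℝ) ^ α ≤ (t0 : ℝ) ^ α :=
          Real.rpow_le_rpow htRpos.le (by exact_mod_cast hcase) hα0.le
        have h3 : 0 ≤ Real.sqrt N * ρ := by positivity
        rw [hCdef]
        nlinarith
      · -- inductive step : t = s+1 with t0 ≤ s
        push_neg at hcase
        obtain ⟨s, rfl⟩ : ∃ s, t = s + 1 := ⟨t - 1, by omega⟩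
        have hs0 : t0 ≤ s := by omega
        have hs1 : 1 ≤ s := by omega
        have ihs := ih s (by omega) hs1
        have hsR : (1 : ℝ) ≤ (s : ℝ) := by exact_mod_cast hs1
        have hsRpos : (0 : ℝ) < (s : ℝ) := by linarith
        set A : ℝ := (s : ℝ) ^ α with hAdef
        have hApos : 0 < A := Real.rpow_pos_of_pos hsRpos α
        have hA1 : (1 : ℝ) ≤ A := by
          rw [hAdef]
          calc (1 : ℝ) = 1 ^ α := (Real.one_rpow α).symm
            _ ≤ (s : ℝ) ^ α := Real.rpow_le_rpow zero_le_one hsR hα0.le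
        set T : ℝ := ((t0 : ℝ) ^ α)⁻¹ with hTdef
        have hTpos : 0 < T := by positivity
        have hTeq : (t0 : ℝ) ^ (-α) = T := by
          rw [hTdef, Real.rpow_neg ht0R.le]
        set P : ℝ := ((s : ℝ) + 1) ^ α with hPdef
        have hPpos : 0 < P := Real.rpow_pos_of_pos (by linarith) α
        -- `√N ρ = C * T`
        have hNρ : Real.sqrt N * ρ = C * T := by
          rw [hCdef, hTdef]
          field_simp
        -- monotonicity of `(s/(s+1))^α`
        have hB1s : ((t0 : ℝ) / ((t0 : ℝ) + 1)) ^ α ≤ ((s : ℝ) / ((s : ℝ) + 1)) ^ α := by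
          apply Real.rpow_le_rpow (by positivity) _ hα0.le
          rw [div_le_div_iff₀ (by positivity) (by positivity)]
          have : (t0 : ℝ) ≤ (s : ℝ) := by exact_mod_cast hs0
          nlinarith
        have hBs_eq : ((s : ℝ) / ((s : ℝ) + 1)) ^ α = A / P := by
          rw [hAdef, hPdef, Real.div_rpow hsRpos.le (by linarith)]
        have hγ1 : A⁻¹ ≤ 1 := inv_le_one_of_one_le₀ hA1
        have he0 : 0 ≤ Real.sqrt (∑ i, ‖xb s i - (N : ℝ)⁻¹ • ∑ j, x s j‖ ^ 2) :=
          Real.sqrt_nonneg _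
        have hcast : ((s + 1 : ℕ) : ℝ) = (s : ℝ) + 1 := by push_cast; ring
        have htarget : Real.sqrt (∑ i, ‖xb (s+1) i - (N : ℝ)⁻¹ • ∑ j, x (s+1) j‖ ^ 2)
            ≤ C / P := by
          calc Real.sqrt (∑ i, ‖xb (s+1) i - (N : ℝ)⁻¹ • ∑ j, x (s+1) j‖ ^ 2)
              ≤ lam * ((1 - A⁻¹) *
                    Real.sqrt (∑ i, ‖xb s i - (N : ℝ)⁻¹ • ∑ j, x s j‖ ^ 2)
                  + A⁻¹ * (Real.sqrt N * ρ)) := hrec s hs1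
            _ ≤ lam * ((1 - A⁻¹) * (C / A) + A⁻¹ * (C * T)) := by
                apply mul_le_mul_of_nonneg_left _ hlam0
                have h1 : (1 - A⁻¹) *
                      Real.sqrt (∑ i, ‖xb s i - (N : ℝ)⁻¹ • ∑ j, x s j‖ ^ 2)
                    ≤ (1 - A⁻¹) * (C / A) :=
                  mul_le_mul_of_nonneg_left ihs (by linarith)
                rw [hNρ]
                linarith
            _ = lam * ((1 - A⁻¹ + T) * (C / A)) := by
                field_simp
            _ ≤ lam * ((1 + T) * (C / A)) := by
                apply mul_le_mul_of_nonneg_left _ hlam0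
                have hCA : 0 ≤ C / A := by positivity
                have hAinv : 0 ≤ A⁻¹ := by positivity
                nlinarith
            _ ≤ (((t0 : ℝ) / ((t0 : ℝ) + 1)) ^ α * (1 + T)⁻¹) * ((1 + T) * (C / A)) := by
                apply mul_le_mul_of_nonneg_right _ (by positivity)
                rw [← hTeq]; exact ht0
            _ = ((t0 : ℝ) / ((t0 : ℝ) + 1)) ^ α * (C / A) := by
                have h1T : (1 : ℝ) + T ≠ 0 := by positivity
                field_simp
            _ ≤ ((s : ℝ) / ((s : ℝ) + 1)) ^ α * (C / A) :=
                mul_le_mul_of_nonneg_right hB1s (by positivity)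
            _ = (A / P) * (C / A) := by rw [hBs_eq]
            _ = C / P := by
                field_simp
        rw [hcast]
        exact htarget
  -- conclusion
  intro t ht
  have htRpos : (0 : ℝ) < (t : ℝ) := by exact_mod_cast ht
  have htApos : (0 : ℝ) < (t : ℝ) ^ α := Real.rpow_pos_of_pos htRpos α
  refine ⟨fun i => ?_, key t ht⟩
  calc ‖xb t i - (N : ℝ)⁻¹ • ∑ j, x t j‖
      ≤ Real.sqrt (∑ j', ‖xb t j' - (N : ℝ)⁻¹ • ∑ j, x t j‖ ^ 2) :=
        le_l2 (fun j' => xb t j' - (N : ℝ)⁻¹ • ∑ j, x t j) i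
    _ ≤ (t0 : ℝ) ^ α * Real.sqrt N * ρ / (t : ℝ) ^ α := key t ht
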